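/- arXiv:2502.03006 — 7 statements merged into one kernel-verified Lean document; each statement's English description precedes it below -/
import Mathlib

section
/- Let K : [t0, t1] → ℝ^{m×r} satisfy the K-step ODE K'(t) = −∇ℓ(K(t)V0ᵀ)V0 on [t0, t1] with t1 = t0 + h, h > 0, where V0 ∈ ℝ^{n×r} has orthonormal columns, and let Y_K(t) := K(t)V0ᵀ. Set αK := min over s ∈ [t0, t1] of ‖∇ℓ(Y_K(s))V0‖ (assume this minimum is attained, e.g. by continuity). Then ℓ(Y_K(t1)) ≤ ℓ(Y_K(t0)) − αK² h. -/
open Matrix Set MeasureTheory Filter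

attribute [local instance] Matrix.frobeniusNormedAddCommGroup Matrix.frobeniusNormedSpace

/-- The continuous linear functional `H ↦ ⟨G, H⟩ = tr(Gᵀ H)`, i.e. pairing with `G` in the
Frobenius inner product.  `hgrad : ∀ Y, HasFDerivAt ℓ (frobCLM (G Y)) Y` then states that
`G Y` is the gradient of `ℓ` at `Y` with respect to the Frobenius inner product. -/
noncomputable def frobCLM {m n : ℕ} (G : Matrix (Fin m) (Fin n) ℝ) :
    Matrix (Fin m) (Fin n) ℝ →L[ℝ] ℝ :=
  LinearMap.toContinuousLinearMap
    { toFun := fun H => (Gᵀ * H).trace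
      map_add' := by intro x y; simp [Matrix.mul_add]
      map_smul' := by intro c x; simp [Matrix.mul_smul] }

lemma trace_transpose_mul_self {a b : ℕ} (A : Matrix (Fin a) (Fin b) ℝ) :
    (Aᵀ * A).trace = ‖A‖ ^ 2 := by
  rw [Matrix.frobenius_norm_def, ← Real.rpow_natCast _ 2, ← Real.rpow_mul (by positivity)]
  norm_num
  rw [Matrix.trace, Finset.sum_comm]
  simp [Matrix.mul_apply, Matrix.diag, Real.rpow_two, Real.norm_eq_abs, sq_abs, sq]

/-- along the K-step on `[t0, t0+h]`, with `αK` the (attained) minimum of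
`‖∇ℓ(K(s)V0ᵀ)V0‖` over `s ∈ [t0,t1]`, one has `ℓ(Y_K(t1)) ≤ ℓ(Y_K(t0)) − αK² h`. -/
theorem kstep_loss_descent {m n r : ℕ}
    (ℓ : Matrix (Fin m) (Fin n) ℝ → ℝ)
    (G : Matrix (Fin m) (Fin n) ℝ → Matrix (Fin m) (Fin n) ℝ)
    (hgrad : ∀ Y, HasFDerivAt ℓ (frobCLM (G Y)) Y)
    (V0 : Matrix (Fin n) (Fin r) ℝ) (hV0 : V0ᵀ * V0 = 1)
    (t0 t1 h : ℝ) (hh : 0 < h) (ht1 : t1 = t0 + h)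
    (K : ℝ → Matrix (Fin m) (Fin r) ℝ)
    (hK : ∀ t ∈ Set.Icc t0 t1, HasDerivAt K (-(G (K t * V0ᵀ) * V0)) t)
    (αK : ℝ)
    (hαK : IsLeast ((fun s => ‖G (K s * V0ᵀ) * V0‖) '' Set.Icc t0 t1) αK) :
    ℓ (K t1 * V0ᵀ) ≤ ℓ (K t0 * V0ᵀ) - αK ^ 2 * h := by
  have hαK0 : 0 ≤ αK := by
    obtain ⟨s, -, hs⟩ := hαK.1
    rw [← hs]; positivity
  -- right multiplication by V0ᵀ as a CLM
  set L : Matrix (Fin m) (Fin r) ℝ →L[ℝ] Matrix (Fin m) (Fin n) ℝ :=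
    LinearMap.toContinuousLinearMap
      { toFun := fun A => A * V0ᵀ
        map_add' := by intro x y; simp [Matrix.add_mul]
        map_smul' := by intro c x; simp [Matrix.smul_mul] } with hL
  set φ : ℝ → ℝ := fun t => ℓ (K t * V0ᵀ) + αK ^ 2 * t with hφ
  -- derivative of φ on Icc
  have hder : ∀ t ∈ Set.Icc t0 t1,
      HasDerivAt φ (-‖G (K t * V0ᵀ) * V0‖ ^ 2 + αK ^ 2) t := by
    intro t ht
    have h1 : HasDerivAt (fun t => K t * V0ᵀ) (-(G (K t * V0ᵀ) * V0) * V0ᵀ) t :=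
      (L.hasFDerivAt.comp_hasDerivAt t (hK t ht))
    have h2 : HasDerivAt (fun t => ℓ (K t * V0ᵀ))
        (frobCLM (G (K t * V0ᵀ)) (-(G (K t * V0ᵀ) * V0) * V0ᵀ)) t :=
      (hgrad (K t * V0ᵀ)).comp_hasDerivAt t h1
    have key : frobCLM (G (K t * V0ᵀ)) (-(G (K t * V0ᵀ) * V0) * V0ᵀ)
        = -‖G (K t * V0ᵀ) * V0‖ ^ 2 := by
      set A := G (K t * V0ᵀ)
      show (Aᵀ * (-(A * V0) * V0ᵀ)).trace = -‖A * V0‖ ^ 2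
      rw [← trace_transpose_mul_self (A * V0)]
      rw [Matrix.neg_mul, Matrix.mul_neg, Matrix.trace_neg, neg_inj]
      rw [← Matrix.mul_assoc, Matrix.trace_mul_comm, Matrix.transpose_mul,
        Matrix.mul_assoc]
    rw [key] at h2
    have h3 := h2.add ((hasDerivAt_id t).const_mul (αK ^ 2))
    rw [mul_one] at h3
    exact h3
  have hcont : ContinuousOn φ (Set.Icc t0 t1) := fun t ht =>
    (hder t ht).continuousAt.continuousWithinAt
  have hanti : AntitoneOn φ (Set.Icc t0 t1) := by
    apply antitoneOn_of_deriv_nonpos (convex_Icc t0 t1) hcont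
    · intro t ht
      rw [interior_Icc] at ht
      exact ((hder t (Set.mem_Icc_of_Ioo ht)).differentiableAt.differentiableWithinAt)
    intro t ht
    rw [interior_Icc] at ht
    have ht' : t ∈ Set.Icc t0 t1 := Set.mem_Icc_of_Ioo ht
    rw [(hder t ht').deriv]
    have : αK ≤ ‖G (K t * V0ᵀ) * V0‖ := hαK.2 ⟨t, ht', rfl⟩
    nlinarith [norm_nonneg (G (K t * V0ᵀ) * V0)]
  have ht0 : t0 ∈ Set.Icc t0 t1 := by constructor <;> linarith
  have ht1' : t1 ∈ Set.Icc t0 t1 := by constructor <;> linarith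
  have := hanti ht0 ht1' (by linarith)
  simp only [hφ] at this
  have : ℓ (K t1 * V0ᵀ) + αK ^ 2 * t1 ≤ ℓ (K t0 * V0ᵀ) + αK ^ 2 * t0 := this
  nlinarith
end

section
/- Let S : [t0, t1] → ℝ^{r×r} satisfy the PSI S-step ODE S'(t) = +U1ᵀ∇ℓ(U1 S(t) V0ᵀ)V0 on [t0, t1], where U1 ∈ ℝ^{m×r} and V0 ∈ ℝ^{n×r} have orthonormal columns. Define Y_S(t) := U1 S(t) V0ᵀ. Then for every t ∈ [t0, t1], the derivative of t ↦ ℓ(Y_S(t)) equals +‖U1ᵀ∇ℓ(Y_S(t))V0‖²; in particular ℓ is non-decreasing along the S-step of the projector-splitting integrator. -/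
open Matrix Set MeasureTheory Filter

attribute [local instance] Matrix.frobeniusNormedAddCommGroup Matrix.frobeniusNormedSpace

lemma trace_transpose_mul_self_eq_norm_sq {p q : ℕ} (A : Matrix (Fin p) (Fin q) ℝ) :
    (Aᵀ * A).trace = ‖A‖ ^ 2 := by
  have h1 : (Aᵀ * A).trace = ∑ j, ∑ i, A i j ^ 2 := by
    simp [Matrix.trace, Matrix.mul_apply, Matrix.diag, sq]
  have h2 : ‖A‖ ^ 2 = ∑ i, ∑ j, A i j ^ 2 := by
    rw [Matrix.frobenius_norm_def]
    rw [← Real.rpow_natCast _ 2, ← Real.rpow_mul (by positivity)]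
    norm_num
  rw [h1, h2, Finset.sum_comm]

noncomputable def mulLR {m n r : ℕ} (U : Matrix (Fin m) (Fin r) ℝ)
    (V : Matrix (Fin n) (Fin r) ℝ) :
    Matrix (Fin r) (Fin r) ℝ →L[ℝ] Matrix (Fin m) (Fin n) ℝ :=
  LinearMap.toContinuousLinearMap
    { toFun := fun M => U * M * Vᵀ
      map_add' := by intro x y; simp [Matrix.mul_add, Matrix.add_mul]
      map_smul' := by intro c x; simp [Matrix.mul_smul, Matrix.smul_mul] }

/-- along the PSI S-step `S'(t) = +U1ᵀ∇ℓ(U1 S(t)V0ᵀ)V0`, the loss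
`t ↦ ℓ(U1 S(t)V0ᵀ)` has derivative `+‖U1ᵀ∇ℓ(U1 S(t)V0ᵀ)V0‖²` at every `t ∈ [t0,t1]`;
in particular the loss is non-decreasing along the S-step. -/
theorem sstep_loss_derivative {m n r : ℕ}
    (ℓ : Matrix (Fin m) (Fin n) ℝ → ℝ)
    (G : Matrix (Fin m) (Fin n) ℝ → Matrix (Fin m) (Fin n) ℝ)
    (hgrad : ∀ Y, HasFDerivAt ℓ (frobCLM (G Y)) Y)
    (U1 : Matrix (Fin m) (Fin r) ℝ) (hU1 : U1ᵀ * U1 = 1)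
    (V0 : Matrix (Fin n) (Fin r) ℝ) (hV0 : V0ᵀ * V0 = 1)
    (t0 t1 : ℝ) (S : ℝ → Matrix (Fin r) (Fin r) ℝ)
    (hS : ∀ t ∈ Set.Icc t0 t1, HasDerivAt S (U1ᵀ * G (U1 * S t * V0ᵀ) * V0) t) :
    (∀ t ∈ Set.Icc t0 t1,
        HasDerivAt (fun s => ℓ (U1 * S s * V0ᵀ)) (‖U1ᵀ * G (U1 * S t * V0ᵀ) * V0‖ ^ 2) t) ∧
    (∀ s ∈ Set.Icc t0 t1, ∀ t ∈ Set.Icc t0 t1, s ≤ t →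
        ℓ (U1 * S s * V0ᵀ) ≤ ℓ (U1 * S t * V0ᵀ)) := by
  have key : ∀ t ∈ Set.Icc t0 t1,
      HasDerivAt (fun s => ℓ (U1 * S s * V0ᵀ)) (‖U1ᵀ * G (U1 * S t * V0ᵀ) * V0‖ ^ 2) t := by
    intro t ht
    set A := U1ᵀ * G (U1 * S t * V0ᵀ) * V0 with hA
    have hY : HasDerivAt (fun s => U1 * S s * V0ᵀ) (U1 * A * V0ᵀ) t :=
      (mulLR U1 V0).hasFDerivAt.comp_hasDerivAt t (hS t ht)
    have hcomp := (hgrad (U1 * S t * V0ᵀ)).comp_hasDerivAt t hY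
    have hval : frobCLM (G (U1 * S t * V0ᵀ)) (U1 * A * V0ᵀ) = ‖A‖ ^ 2 := by
      show ((G (U1 * S t * V0ᵀ))ᵀ * (U1 * A * V0ᵀ)).trace = ‖A‖ ^ 2
      rw [← trace_transpose_mul_self_eq_norm_sq A]
      rw [show Aᵀ * A = V0ᵀ * ((G (U1 * S t * V0ᵀ))ᵀ * (U1 * A)) from by
        rw [hA]; simp [Matrix.transpose_mul, Matrix.mul_assoc]]
      rw [Matrix.trace_mul_comm (V0ᵀ), Matrix.mul_assoc]
      simp [Matrix.mul_assoc]
    exact hcomp.congr_deriv hval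
  refine ⟨key, ?_⟩
  intro s hs t ht hst
  have hmono : MonotoneOn (fun s => ℓ (U1 * S s * V0ᵀ)) (Set.Icc t0 t1) := by
    apply monotoneOn_of_deriv_nonneg (convex_Icc t0 t1)
    · exact fun x hx => (key x hx).continuousAt.continuousWithinAt
    · intro x hx
      rw [interior_Icc] at hx
      exact (key x (Ioo_subset_Icc_self hx)).differentiableAt.differentiableWithinAt
    · intro x hx
      rw [interior_Icc] at hx
      rw [(key x (Ioo_subset_Icc_self hx)).deriv]
      positivity
  exact hmono hs ht hst
end

section
/- (Loss evaluation of the PSI.) Let h > 0, t1 = t0 + h, let U0 ∈ ℝ^{m×r}, V0 ∈ ℝ^{n×r} have orthonormal columns and S0 ∈ ℝ^{r×r}, and set Y(t0) = U0 S0 V0ᵀ. Suppose: (i) K : [t0,t1] → ℝ^{m×r} satisfies K'(t) = −∇ℓ(K(t)V0ᵀ)V0 with K(t0) = U0 S0; (ii) U1 ∈ ℝ^{m×r} has orthonormal columns and S : [t0,t1] → ℝ^{r×r} satisfies S'(t) = +U1ᵀ∇ℓ(U1 S(t) V0ᵀ)V0 with U1 S(t0) = K(t1); (iii) L : [t0,t1]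 → ℝ^{n×r} satisfies L'(t) = −∇ℓ(U1 L(t)ᵀ)ᵀU1 with L(t0) = V0 S(t1)ᵀ; and set Y(t1) = U1 L(t1)ᵀ. Define αK := min_{s∈[t0,t1]} ‖∇ℓ(K(s)V0ᵀ)V0‖, αS := max_{s∈[t0,t1]} ‖U1ᵀ∇ℓ(U1 S(s) V0ᵀ)V0‖, αL := min_{s∈[t0,t1]} ‖∇ℓ(U1 L(s)ᵀ)ᵀU1‖ (assume these extrema are attained). Then ℓ(Y(t1)) ≤ ℓ(Y(t0)) − αK² h + αS² h − αL² h. -/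
open Matrix Set MeasureTheory Filter

attribute [local instance] Matrix.frobeniusNormedAddCommGroup Matrix.frobeniusNormedSpace

lemma trace_transpose_mul_self_eq {p q : ℕ} (M : Matrix (Fin p) (Fin q) ℝ) :
    (Mᵀ * M).trace = ‖M‖ ^ 2 := by
  have hS : (0:ℝ) ≤ ∑ i, ∑ j, ‖M i j‖ ^ (2:ℝ) := by
    apply Finset.sum_nonneg; intro i _; apply Finset.sum_nonneg; intro j _
    rw [Real.rpow_two]; positivity
  have h2 : ‖M‖ ^ 2 = ∑ i, ∑ j, ‖M i j‖ ^ (2:ℝ) := by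
    rw [Matrix.frobenius_norm_def, ← Real.rpow_natCast _ 2, ← Real.rpow_mul hS]
    norm_num
  rw [h2]
  rw [Matrix.trace]
  simp only [Matrix.diag, Matrix.mul_apply, Matrix.transpose_apply]
  rw [Finset.sum_comm]
  congr 1; ext i; congr 1; ext j
  rw [Real.rpow_two, Real.norm_eq_abs, sq_abs, sq]

lemma le_of_derivIcc_le {f f' : ℝ → ℝ} {a b c : ℝ} (hab : a ≤ b)
    (hf : ∀ t ∈ Set.Icc a b, HasDerivAt f (f' t) t)
    (hc : ∀ t ∈ Set.Icc a b, f' t ≤ c) : f b ≤ f a + c * (b - a) := by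
  set g : ℝ → ℝ := fun t => f t - c * t with hg
  have hg' : ∀ t ∈ Set.Icc a b, HasDerivAt g (f' t - c) t := fun t ht =>
    (hf t ht).sub (by simpa using (hasDerivAt_id t).const_mul c)
  have hanti : AntitoneOn g (Set.Icc a b) := by
    apply antitoneOn_of_deriv_nonpos (convex_Icc a b)
    · exact fun t ht => (hg' t ht).continuousAt.continuousWithinAt
    · intro t ht; rw [interior_Icc] at ht
      exact (hg' t (Ioo_subset_Icc_self ht)).differentiableAt.differentiableWithinAt
    · intro t ht; rw [interior_Icc] at ht
      rw [(hg' t (Ioo_subset_Icc_self ht)).deriv]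
      linarith [hc t (Ioo_subset_Icc_self ht)]
  have h := hanti (left_mem_Icc.2 hab) (right_mem_Icc.2 hab) hab
  simp only [g] at h
  have : c * (b - a) = c * b - c * a := by ring
  linarith

noncomputable def mulRightCLM {p q s : ℕ} (B : Matrix (Fin q) (Fin s) ℝ) :
    Matrix (Fin p) (Fin q) ℝ →L[ℝ] Matrix (Fin p) (Fin s) ℝ :=
  LinearMap.toContinuousLinearMap
    { toFun := fun A => A * B
      map_add' := by intro x y; simp [Matrix.add_mul]
      map_smul' := by intro c x; simp [Matrix.smul_mul] }

noncomputable def mulBothCLM {p q s u : ℕ} (A : Matrix (Fin p) (Fin q) ℝ)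
    (B : Matrix (Fin s) (Fin u) ℝ) :
    Matrix (Fin q) (Fin s) ℝ →L[ℝ] Matrix (Fin p) (Fin u) ℝ :=
  LinearMap.toContinuousLinearMap
    { toFun := fun X => A * X * B
      map_add' := by intro x y; simp [Matrix.mul_add, Matrix.add_mul]
      map_smul' := by intro c x; simp [Matrix.mul_smul, Matrix.smul_mul] }

noncomputable def mulTransCLM {p q s : ℕ} (A : Matrix (Fin p) (Fin q) ℝ) :
    Matrix (Fin s) (Fin q) ℝ →L[ℝ] Matrix (Fin p) (Fin s) ℝ :=
  LinearMap.toContinuousLinearMap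
    { toFun := fun X => A * Xᵀ
      map_add' := by intro x y; simp [Matrix.mul_add]
      map_smul' := by intro c x; simp [Matrix.mul_smul, Matrix.transpose_smul] }

/-- Loss evaluation of the PSI: with the K-, S- and L-substeps of the
projector-splitting integrator and the attained extrema `αK, αS, αL`, one has
`ℓ(Y(t1)) ≤ ℓ(Y(t0)) − αK² h + αS² h − αL² h`. -/
theorem psi_loss_evaluation {m n r : ℕ}
    (ℓ : Matrix (Fin m) (Fin n) ℝ → ℝ)
    (G : Matrix (Fin m) (Fin n) ℝ → Matrix (Fin m) (Fin n) ℝ)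
    (hgrad : ∀ Y, HasFDerivAt ℓ (frobCLM (G Y)) Y)
    (t0 t1 h : ℝ) (hh : 0 < h) (ht1 : t1 = t0 + h)
    (U0 : Matrix (Fin m) (Fin r) ℝ) (hU0 : U0ᵀ * U0 = 1)
    (V0 : Matrix (Fin n) (Fin r) ℝ) (hV0 : V0ᵀ * V0 = 1)
    (S0 : Matrix (Fin r) (Fin r) ℝ)
    -- (i) K-step
    (K : ℝ → Matrix (Fin m) (Fin r) ℝ)
    (hK : ∀ t ∈ Set.Icc t0 t1, HasDerivAt K (-(G (K t * V0ᵀ) * V0)) t)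
    (hK0 : K t0 = U0 * S0)
    -- (ii) S-step (reversed sign)
    (U1 : Matrix (Fin m) (Fin r) ℝ) (hU1 : U1ᵀ * U1 = 1)
    (S : ℝ → Matrix (Fin r) (Fin r) ℝ)
    (hS : ∀ t ∈ Set.Icc t0 t1, HasDerivAt S (U1ᵀ * G (U1 * S t * V0ᵀ) * V0) t)
    (hS0 : U1 * S t0 = K t1)
    -- (iii) L-step
    (L : ℝ → Matrix (Fin n) (Fin r) ℝ)
    (hL : ∀ t ∈ Set.Icc t0 t1, HasDerivAt L (-((G (U1 * (L t)ᵀ))ᵀ * U1)) t)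
    (hL0 : L t0 = V0 * (S t1)ᵀ)
    -- attained extrema
    (αK αS αL : ℝ)
    (hαK : IsLeast ((fun s => ‖G (K s * V0ᵀ) * V0‖) '' Set.Icc t0 t1) αK)
    (hαS : IsGreatest ((fun s => ‖U1ᵀ * G (U1 * S s * V0ᵀ) * V0‖) '' Set.Icc t0 t1) αS)
    (hαL : IsLeast ((fun s => ‖(G (U1 * (L s)ᵀ))ᵀ * U1‖) '' Set.Icc t0 t1) αL) :
    ℓ (U1 * (L t1)ᵀ) ≤ ℓ (U0 * S0 * V0ᵀ) - αK ^ 2 * h + αS ^ 2 * h - αL ^ 2 * h := by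
  have hab : t0 ≤ t1 := by rw [ht1]; linarith
  have hba : t1 - t0 = h := by rw [ht1]; ring
  have ht0m : t0 ∈ Set.Icc t0 t1 := left_mem_Icc.2 hab
  -- nonnegativity of αK, αL
  obtain ⟨sK, _, hsK⟩ := hαK.1
  have hαK0 : 0 ≤ αK := hsK ▸ norm_nonneg _
  obtain ⟨sL, _, hsL⟩ := hαL.1
  have hαL0 : 0 ≤ αL := hsL ▸ norm_nonneg _
  have hαS0 : 0 ≤ αS := le_trans (norm_nonneg _) (hαS.2 ⟨t0, ht0m, rfl⟩)
  -- K step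
  have hKstep : ℓ (K t1 * V0ᵀ) ≤ ℓ (K t0 * V0ᵀ) + (-(αK ^ 2)) * (t1 - t0) := by
    apply le_of_derivIcc_le hab (f' := fun t => -(‖G (K t * V0ᵀ) * V0‖ ^ 2))
    · intro t ht
      have h1 : HasDerivAt (fun t => K t * V0ᵀ) (-(G (K t * V0ᵀ) * V0) * V0ᵀ) t := by
        have := ((mulRightCLM (p := m) V0ᵀ).hasFDerivAt (x := K t)).comp_hasDerivAt t (hK t ht)
        exact this
      have h2 := (hgrad (K t * V0ᵀ)).comp_hasDerivAt t h1
      refine h2.congr_deriv ?_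
      set Gt := G (K t * V0ᵀ)
      have hval : frobCLM Gt (-(Gt * V0) * V0ᵀ) = -((Gtᵀ * (Gt * V0) * V0ᵀ).trace) := by
        simp [frobCLM, Matrix.mul_neg, Matrix.neg_mul, Matrix.mul_assoc]
      refine hval.trans ?_
      rw [Matrix.trace_mul_comm, ← Matrix.mul_assoc, ← Matrix.transpose_mul,
        trace_transpose_mul_self_eq]
    · intro t ht
      have h1 : αK ≤ ‖G (K t * V0ᵀ) * V0‖ := hαK.2 ⟨t, ht, rfl⟩
      nlinarith [norm_nonneg (G (K t * V0ᵀ) * V0)]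
  -- S step
  have hSstep : ℓ (U1 * S t1 * V0ᵀ) ≤ ℓ (U1 * S t0 * V0ᵀ) + αS ^ 2 * (t1 - t0) := by
    apply le_of_derivIcc_le hab (f' := fun t => ‖U1ᵀ * G (U1 * S t * V0ᵀ) * V0‖ ^ 2)
    · intro t ht
      have h1 : HasDerivAt (fun t => U1 * S t * V0ᵀ) (U1 * (U1ᵀ * G (U1 * S t * V0ᵀ) * V0) * V0ᵀ) t := by
        have := ((mulBothCLM U1 V0ᵀ).hasFDerivAt (x := S t)).comp_hasDerivAt t (hS t ht)
        exact this
      have h2 := (hgrad (U1 * S t * V0ᵀ)).comp_hasDerivAt t h1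
      refine h2.congr_deriv ?_
      set Gt := G (U1 * S t * V0ᵀ)
      have hval : frobCLM Gt (U1 * (U1ᵀ * Gt * V0) * V0ᵀ) =
          ((Gtᵀ * (U1 * (U1ᵀ * Gt * V0)) * V0ᵀ).trace) := by
        simp [frobCLM, Matrix.mul_assoc]
      refine hval.trans ?_
      rw [Matrix.trace_mul_comm]
      have heq : V0ᵀ * (Gtᵀ * (U1 * (U1ᵀ * Gt * V0))) = (U1ᵀ * Gt * V0)ᵀ * (U1ᵀ * Gt * V0) := by
        simp [Matrix.transpose_mul, Matrix.mul_assoc]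
      rw [heq, trace_transpose_mul_self_eq]
    · intro t ht
      have h1 : ‖U1ᵀ * G (U1 * S t * V0ᵀ) * V0‖ ≤ αS := hαS.2 ⟨t, ht, rfl⟩
      nlinarith [norm_nonneg (U1ᵀ * G (U1 * S t * V0ᵀ) * V0)]
  -- L step
  have hLstep : ℓ (U1 * (L t1)ᵀ) ≤ ℓ (U1 * (L t0)ᵀ) + (-(αL ^ 2)) * (t1 - t0) := by
    apply le_of_derivIcc_le hab (f' := fun t => -(‖(G (U1 * (L t)ᵀ))ᵀ * U1‖ ^ 2))
    · intro t ht
      have h1 : HasDerivAt (fun t => U1 * (L t)ᵀ) (U1 * (-((G (U1 * (L t)ᵀ))ᵀ * U1))ᵀ) t := by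
        have := ((mulTransCLM (s := n) U1).hasFDerivAt (x := L t)).comp_hasDerivAt t (hL t ht)
        exact this
      have h2 := (hgrad (U1 * (L t)ᵀ)).comp_hasDerivAt t h1
      refine h2.congr_deriv ?_
      set Gt := G (U1 * (L t)ᵀ)
      have hval : frobCLM Gt (U1 * (-(Gtᵀ * U1))ᵀ) = -((Gtᵀ * U1 * (Gtᵀ * U1)ᵀ).trace) := by
        simp [frobCLM, Matrix.transpose_mul, Matrix.mul_neg, Matrix.neg_mul, Matrix.mul_assoc]
      refine hval.trans ?_
      rw [Matrix.trace_mul_comm, trace_transpose_mul_self_eq]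
    · intro t ht
      have h1 : αL ≤ ‖(G (U1 * (L t)ᵀ))ᵀ * U1‖ := hαL.2 ⟨t, ht, rfl⟩
      nlinarith [norm_nonneg ((G (U1 * (L t)ᵀ))ᵀ * U1)]
  -- chain
  have e1 : K t0 * V0ᵀ = U0 * S0 * V0ᵀ := by rw [hK0]
  have e2 : U1 * S t0 * V0ᵀ = K t1 * V0ᵀ := by rw [hS0]
  have e3 : U1 * (L t0)ᵀ = U1 * S t1 * V0ᵀ := by
    rw [hL0]; simp [Matrix.transpose_mul, Matrix.mul_assoc]
  rw [e1] at hKstep; rw [e2] at hSstep; rw [e3] at hLstep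
  rw [hba] at hKstep hSstep hLstep
  linarith
end

section
/- Let h > 0, t1 = t0 + h. Assume ∇ℓ is Lipschitz with constant c_l > 0 and bounded by B > 0 in Frobenius norm. Let V0 ∈ ℝ^{n×r} and U1 ∈ ℝ^{m×r} have orthonormal columns, let K : [t0,t1] → ℝ^{m×r} satisfy K'(t) = −∇ℓ(K(t)V0ᵀ)V0, and let S̃ : [t0,t1] → ℝ^{r×r} satisfy S̃'(t) = +U1ᵀ∇ℓ(U1 S̃(t)V0ᵀ)V0 with U1 S̃(t0) = K(t1). Then the matrix Δ := ∫_{t0}^{t1} ∇ℓ(K(t)V0ᵀ) dt − ∫_{t0}^{t1} ∇ℓ(U1 S̃(t)V0ᵀ) dt satisfies ‖Δ‖ ≤ 2 c_l B h². -/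
open Matrix Set MeasureTheory Filter

attribute [local instance] Matrix.frobeniusNormedAddCommGroup Matrix.frobeniusNormedSpace

lemma frob_sq {m n : ℕ} (A : Matrix (Fin m) (Fin n) ℝ) : ‖A‖^2 = (Aᵀ * A).trace := by
  have h0 : (0:ℝ) ≤ ∑ i, ∑ j, ‖A i j‖ ^ (2:ℝ) := by positivity
  rw [Matrix.frobenius_norm_def, ← Real.rpow_natCast _ 2, ← Real.rpow_mul h0]
  norm_num
  rw [Finset.sum_comm]
  simp [Matrix.trace, Matrix.mul_apply, Matrix.diag, Real.rpow_two, sq_abs, sq]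

lemma norm_eq_of_sq_eq {m n p q : ℕ} {A : Matrix (Fin m) (Fin n) ℝ} {B : Matrix (Fin p) (Fin q) ℝ}
    (hsq : ‖A‖^2 = ‖B‖^2) : ‖A‖ = ‖B‖ := by
  nlinarith [norm_nonneg A, norm_nonneg B, sq_nonneg (‖A‖ - ‖B‖), sq_nonneg (‖A‖ + ‖B‖)]

lemma norm_mul_tr {p n r : ℕ} (V : Matrix (Fin n) (Fin r) ℝ) (hV : Vᵀ * V = 1)
    (X : Matrix (Fin p) (Fin r) ℝ) : ‖X * Vᵀ‖ = ‖X‖ := by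
  apply norm_eq_of_sq_eq
  rw [frob_sq, frob_sq, Matrix.transpose_mul, Matrix.transpose_transpose,
    show V * Xᵀ * (X * Vᵀ) = V * (Xᵀ * X) * Vᵀ by simp [Matrix.mul_assoc],
    Matrix.trace_mul_cycle, ← Matrix.mul_assoc, hV, Matrix.one_mul]

lemma norm_orth_mul {p m r : ℕ} (U : Matrix (Fin m) (Fin r) ℝ) (hU : Uᵀ * U = 1)
    (X : Matrix (Fin r) (Fin p) ℝ) : ‖U * X‖ = ‖X‖ := by
  apply norm_eq_of_sq_eq
  rw [frob_sq, frob_sq, Matrix.transpose_mul,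
    show Xᵀ * Uᵀ * (U * X) = Xᵀ * (Uᵀ * U) * X by simp [Matrix.mul_assoc], hU, Matrix.mul_one]

lemma norm_mul_orth_le {p n r : ℕ} (V : Matrix (Fin n) (Fin r) ℝ) (hV : Vᵀ * V = 1)
    (X : Matrix (Fin p) (Fin n) ℝ) : ‖X * V‖ ≤ ‖X‖ := by
  set P := V * Vᵀ with hPdef
  have h1 : ‖X * V‖ = ‖X * P‖ := by
    rw [hPdef, ← Matrix.mul_assoc, norm_mul_tr V hV]
  have hPt : Pᵀ = P := by simp [hPdef, Matrix.transpose_mul]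
  have hP : P * P = P := by
    rw [hPdef, ← Matrix.mul_assoc, Matrix.mul_assoc V, hV, Matrix.mul_one]
  have key : ‖X‖^2 = ‖X * P‖^2 + ‖X - X * P‖^2 := by
    rw [frob_sq, frob_sq, frob_sq]
    have e1 : (X * P)ᵀ * (X * P) = Pᵀ * (Xᵀ * X) * P := by simp [Matrix.transpose_mul, Matrix.mul_assoc]
    have e2 : (X - X * P)ᵀ * (X - X * P) = Xᵀ * X - Pᵀ * (Xᵀ * X) - (Xᵀ * X) * P + Pᵀ * (Xᵀ * X) * P := by
      simp [Matrix.transpose_sub, Matrix.sub_mul, Matrix.mul_sub, Matrix.transpose_mul, Matrix.mul_assoc]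
      abel
    rw [e1, e2]
    have tP : (Pᵀ * (Xᵀ * X) * P).trace = ((Xᵀ * X) * P).trace := by
      rw [hPt, Matrix.trace_mul_cycle P (Xᵀ*X) P, hP]; exact Matrix.trace_mul_comm P (Xᵀ*X)
    have tc : (Pᵀ * (Xᵀ * X)).trace = ((Xᵀ * X) * P).trace := by
      rw [hPt]; exact Matrix.trace_mul_comm P (Xᵀ*X)
    simp only [Matrix.trace_sub, Matrix.trace_add]
    linarith
  have := sq_nonneg ‖X - X * P‖
  nlinarith [norm_nonneg (X*V), norm_nonneg X, h1]

lemma norm_orthT_mul_le {p m r : ℕ} (U : Matrix (Fin m) (Fin r) ℝ) (hU : Uᵀ * U = 1)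
    (X : Matrix (Fin m) (Fin p) ℝ) : ‖Uᵀ * X‖ ≤ ‖X‖ := by
  rw [← Matrix.frobenius_norm_transpose (Uᵀ * X), Matrix.transpose_mul, Matrix.transpose_transpose,
    ← Matrix.frobenius_norm_transpose X]
  exact norm_mul_orth_le U hU Xᵀ

/-- bound on `Δ = ∫∇ℓ(K(t)V0ᵀ)dt − ∫∇ℓ(U1 S̃(t)V0ᵀ)dt` for the PSI K- and
S-steps: `‖Δ‖ ≤ 2 c_l B h²`. -/
theorem psi_delta_bound {m n r : ℕ}
    (ℓ : Matrix (Fin m) (Fin n) ℝ → ℝ)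
    (G : Matrix (Fin m) (Fin n) ℝ → Matrix (Fin m) (Fin n) ℝ)
    (hgrad : ∀ Y, HasFDerivAt ℓ (frobCLM (G Y)) Y)
    (cl B : ℝ) (hcl : 0 < cl) (hB : 0 < B)
    (hlip : ∀ Z1 Z2, ‖G Z1 - G Z2‖ ≤ cl * ‖Z1 - Z2‖)
    (hbound : ∀ Z, ‖G Z‖ ≤ B)
    (t0 t1 h : ℝ) (hh : 0 < h) (ht1 : t1 = t0 + h)
    (V0 : Matrix (Fin n) (Fin r) ℝ) (hV0 : V0ᵀ * V0 = 1)
    (U1 : Matrix (Fin m) (Fin r) ℝ) (hU1 : U1ᵀ * U1 = 1)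
    (K : ℝ → Matrix (Fin m) (Fin r) ℝ)
    (hK : ∀ t ∈ Set.Icc t0 t1, HasDerivAt K (-(G (K t * V0ᵀ) * V0)) t)
    (S : ℝ → Matrix (Fin r) (Fin r) ℝ)
    (hS : ∀ t ∈ Set.Icc t0 t1, HasDerivAt S (U1ᵀ * G (U1 * S t * V0ᵀ) * V0) t)
    (hS0 : U1 * S t0 = K t1) :
    ‖(∫ t in t0..t1, G (K t * V0ᵀ)) - ∫ t in t0..t1, G (U1 * S t * V0ᵀ)‖ ≤
      2 * cl * B * h ^ 2 := by
  subst ht1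
  have ht01 : t0 ≤ t0 + h := by linarith
  -- continuity of G
  have hGcont : Continuous G := by
    have : LipschitzWith (Real.toNNReal cl) G := by
      apply LipschitzWith.of_dist_le_mul
      intro x y
      rw [dist_eq_norm, dist_eq_norm, Real.coe_toNNReal cl hcl.le]
      exact hlip x y
    exact this.continuous
  have hKc : ContinuousOn K (Set.Icc t0 (t0 + h)) := fun t ht => (hK t ht).continuousAt.continuousWithinAt
  have hSc : ContinuousOn S (Set.Icc t0 (t0 + h)) := fun t ht => (hS t ht).continuousAt.continuousWithinAt
  have hmulK : Continuous (fun M : Matrix (Fin m) (Fin r) ℝ => M * V0ᵀ) :=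
    Continuous.matrix_mul continuous_id continuous_const
  have hmulS : Continuous (fun M : Matrix (Fin r) (Fin r) ℝ => U1 * M * V0ᵀ) :=
    Continuous.matrix_mul (Continuous.matrix_mul continuous_const continuous_id) continuous_const
  have hfc : ContinuousOn (fun t => G (K t * V0ᵀ)) (Set.Icc t0 (t0 + h)) :=
    hGcont.comp_continuousOn (hmulK.comp_continuousOn hKc)
  have hgc : ContinuousOn (fun t => G (U1 * S t * V0ᵀ)) (Set.Icc t0 (t0 + h)) :=
    hGcont.comp_continuousOn (hmulS.comp_continuousOn hSc)
  letI : ENormedAddMonoid (Matrix (Fin m) (Fin n) ℝ) :=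
    NormedAddCommGroup.toENormedAddCommMonoid.toENormedAddMonoid
  have hf_int : IntervalIntegrable (fun t => G (K t * V0ᵀ)) volume t0 (t0 + h) :=
    (by rwa [Set.uIcc_of_le ht01] : ContinuousOn _ (Set.uIcc t0 (t0 + h))).intervalIntegrable
  have hg_int : IntervalIntegrable (fun t => G (U1 * S t * V0ᵀ)) volume t0 (t0 + h) :=
    (by rwa [Set.uIcc_of_le ht01] : ContinuousOn _ (Set.uIcc t0 (t0 + h))).intervalIntegrable
  -- Lipschitz estimates for K and S on the interval
  have hKlip : ∀ x ∈ Set.Icc t0 (t0 + h), ∀ y ∈ Set.Icc t0 (t0 + h), ‖K y - K x‖ ≤ B * ‖y - x‖ := by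
    intro x hx y hy
    refine (convex_Icc t0 (t0 + h)).norm_image_sub_le_of_norm_hasDerivWithin_le
      (fun t ht => (hK t ht).hasDerivWithinAt) (fun t ht => ?_) hx hy
    rw [norm_neg]
    exact (norm_mul_orth_le V0 hV0 _).trans (hbound _)
  have hSlip : ∀ x ∈ Set.Icc t0 (t0 + h), ∀ y ∈ Set.Icc t0 (t0 + h), ‖S y - S x‖ ≤ B * ‖y - x‖ := by
    intro x hx y hy
    refine (convex_Icc t0 (t0 + h)).norm_image_sub_le_of_norm_hasDerivWithin_le
      (fun t ht => (hS t ht).hasDerivWithinAt) (fun t ht => ?_) hx hy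
    exact (norm_mul_orth_le V0 hV0 _).trans ((norm_orthT_mul_le U1 hU1 _).trans (hbound _))
  -- pointwise bound
  have hpt : ∀ t ∈ Set.uIoc t0 (t0 + h), ‖G (K t * V0ᵀ) - G (U1 * S t * V0ᵀ)‖ ≤ 2 * cl * B * h := by
    intro t ht
    rw [Set.uIoc_of_le ht01] at ht
    have htI : t ∈ Set.Icc t0 (t0 + h) := ⟨ht.1.le, ht.2⟩
    have ht0I : t0 ∈ Set.Icc t0 (t0 + h) := ⟨le_refl _, ht01⟩
    have ht1I : (t0 + h) ∈ Set.Icc t0 (t0 + h) := ⟨ht01, le_refl _⟩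
    have step1 : ‖G (K t * V0ᵀ) - G (U1 * S t * V0ᵀ)‖ ≤ cl * ‖K t - U1 * S t‖ := by
      have := hlip (K t * V0ᵀ) (U1 * S t * V0ᵀ)
      rwa [← Matrix.sub_mul, norm_mul_tr V0 hV0] at this
    have tri : ‖K t - U1 * S t‖ ≤ ‖K t - K (t0 + h)‖ + ‖K (t0 + h) - U1 * S t‖ := by
      have := dist_triangle (K t) (K (t0 + h)) (U1 * S t)
      simpa [dist_eq_norm] using this
    have b1 : ‖K t - K (t0 + h)‖ ≤ B * h := by
      have := hKlip (t0 + h) ht1I t htI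
      have habs : ‖t - (t0 + h)‖ ≤ h := by
        rw [Real.norm_eq_abs, abs_le]
        obtain ⟨a, b⟩ := htI
        constructor <;> linarith
      calc ‖K t - K (t0 + h)‖ ≤ B * ‖t - (t0 + h)‖ := this
        _ ≤ B * h := by apply mul_le_mul_of_nonneg_left habs hB.le
    have b2 : ‖K (t0 + h) - U1 * S t‖ ≤ B * h := by
      rw [← hS0, ← Matrix.mul_sub, norm_orth_mul U1 hU1]
      have := hSlip t htI t0 ht0I
      have habs : ‖t0 - t‖ ≤ h := by
        rw [Real.norm_eq_abs, abs_le]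
        obtain ⟨a, b⟩ := htI
        constructor <;> linarith
      calc ‖S t0 - S t‖ ≤ B * ‖t0 - t‖ := this
        _ ≤ B * h := by apply mul_le_mul_of_nonneg_left habs hB.le
    calc ‖G (K t * V0ᵀ) - G (U1 * S t * V0ᵀ)‖ ≤ cl * ‖K t - U1 * S t‖ := step1
      _ ≤ cl * (B * h + B * h) := by
          apply mul_le_mul_of_nonneg_left _ hcl.le
          exact tri.trans (add_le_add b1 b2)
      _ = 2 * cl * B * h := by ring
  rw [← intervalIntegral.integral_sub hf_int hg_int]
  have hle := intervalIntegral.norm_integral_le_of_norm_le_const hpt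
  have : |t0 + h - t0| = h := by simp [abs_of_pos hh]
  rw [this] at hle
  calc ‖∫ t in t0..(t0 + h), (G (K t * V0ᵀ) - G (U1 * S t * V0ᵀ))‖ ≤ 2 * cl * B * h * h := hle
    _ = 2 * cl * B * h ^ 2 := by ring
end

section
/- (Loss evaluation of the backward-corrected PSI.) Let h > 0, t1 = t0 + h. Assume ∇ℓ is Lipschitz with constant c_l > 0 and bounded by B > 0 in Frobenius norm. Let U0, U1 ∈ ℝ^{m×r} and V0 ∈ ℝ^{n×r} have orthonormal columns, S0 ∈ ℝ^{r×r}, and set Y0 = U0 S0 V0ᵀ and S̄1 = U1ᵀ U0 S0. Let L : [t0,t1] → ℝ^{n×r} satisfy L'(t) = −∇ℓ(U1 L(t)ᵀ)ᵀU1 with L(t0) = V0 S̄1ᵀ, and set Y(t1) = U1 L(t1)ᵀ. Define αL := min_{s∈[t0,t1]} ‖∇ℓ(U1 L(s)ᵀ)ᵀU1‖ (assume the minimum is attained). Then ℓ(Y(t1)) ≤ ℓ(Y0) + B ‖(I − U1 U1ᵀ)Y0‖ + (c_l/2) ‖(I − U1 U1ᵀ)Y0‖² − h αL². -/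
open Matrix Set MeasureTheory Filter

attribute [local instance] Matrix.frobeniusNormedAddCommGroup Matrix.frobeniusNormedSpace

lemma frobCLM_apply {m n : ℕ} (G H : Matrix (Fin m) (Fin n) ℝ) :
    frobCLM G H = (Gᵀ * H).trace := rfl

lemma bcpsi_norm_eq_sqrt {m n : ℕ} (A : Matrix (Fin m) (Fin n) ℝ) :
    ‖A‖ = Real.sqrt (∑ i, ∑ j, (A i j) ^ 2) := by
  rw [Matrix.frobenius_norm_def, Real.sqrt_eq_rpow]
  congr 1
  refine Finset.sum_congr rfl fun i _ => Finset.sum_congr rfl fun j _ => ?_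
  rw [show ((2:ℝ)) = ((2:ℕ):ℝ) by norm_num, Real.rpow_natCast]
  simp [Real.norm_eq_abs, sq_abs]

lemma bcpsi_norm_sq_eq {m n : ℕ} (A : Matrix (Fin m) (Fin n) ℝ) :
    ‖A‖ ^ 2 = ∑ i, ∑ j, (A i j) ^ 2 := by
  rw [bcpsi_norm_eq_sqrt, Real.sq_sqrt]; positivity

lemma bcpsi_trace_eq_sum {m n : ℕ} (A B : Matrix (Fin m) (Fin n) ℝ) :
    (Aᵀ * B).trace = ∑ i, ∑ j, A i j * B i j := by
  rw [Matrix.trace, Finset.sum_comm]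
  simp [Matrix.diag, Matrix.mul_apply, Matrix.transpose_apply]

lemma bcpsi_trace_transpose_mul_self {m n : ℕ} (A : Matrix (Fin m) (Fin n) ℝ) :
    (Aᵀ * A).trace = ‖A‖ ^ 2 := by
  rw [bcpsi_trace_eq_sum, bcpsi_norm_sq_eq]; simp [sq]

lemma bcpsi_trace_le {m n : ℕ} (A B : Matrix (Fin m) (Fin n) ℝ) :
    (Aᵀ * B).trace ≤ ‖A‖ * ‖B‖ := by
  rw [bcpsi_trace_eq_sum, bcpsi_norm_eq_sqrt, bcpsi_norm_eq_sqrt]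
  calc ∑ i, ∑ j, A i j * B i j
      = ∑ p : Fin m × Fin n, A p.1 p.2 * B p.1 p.2 := by
        rw [← Finset.sum_product']; rfl
    _ ≤ _ := by
        refine (Real.sum_mul_le_sqrt_mul_sqrt _ _ _).trans_eq ?_
        congr 1 <;> · congr 1; rw [← Finset.sum_product']; rfl

/-- Descent lemma: for `ℓ` with `cl`-Lipschitz gradient,
`ℓ(Z) ≤ ℓ(Y) + ⟨∇ℓ(Y), Z - Y⟩ + (cl/2)‖Z - Y‖²`. -/
lemma bcpsi_descent {m n : ℕ}
    (ℓ : Matrix (Fin m) (Fin n) ℝ → ℝ)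
    (G : Matrix (Fin m) (Fin n) ℝ → Matrix (Fin m) (Fin n) ℝ)
    (hgrad : ∀ Y, HasFDerivAt ℓ (frobCLM (G Y)) Y)
    (cl : ℝ)
    (hlip : ∀ Z1 Z2, ‖G Z1 - G Z2‖ ≤ cl * ‖Z1 - Z2‖)
    (Y Z : Matrix (Fin m) (Fin n) ℝ) :
    ℓ Z ≤ ℓ Y + ((G Y)ᵀ * (Z - Y)).trace + cl / 2 * ‖Z - Y‖ ^ 2 := by
  set D := Z - Y with hD
  set c1 := ((G Y)ᵀ * D).trace with hc1
  set f : ℝ → ℝ := fun s => ℓ (Y + s • D) - s * c1 - cl / 2 * s ^ 2 * ‖D‖ ^ 2 with hf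
  have hderiv : ∀ s : ℝ, HasDerivAt f
      (frobCLM (G (Y + s • D)) D - c1 - cl / 2 * (2 * s) * ‖D‖ ^ 2) s := by
    intro s
    have h1 : HasDerivAt (fun s : ℝ => Y + s • D) D s := by
      have := ((hasDerivAt_id s).smul_const D).const_add Y
      simp only [id_eq, id, one_smul] at this
      exact this
    have h2 : HasDerivAt (fun s : ℝ => ℓ (Y + s • D)) (frobCLM (G (Y + s • D)) D) s :=
      (hgrad (Y + s • D)).comp_hasDerivAt s h1
    have h3 : HasDerivAt (fun s : ℝ => s * c1) c1 s := by
      simpa using (hasDerivAt_id s).mul_const c1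
    have h4 : HasDerivAt (fun s : ℝ => cl / 2 * s ^ 2 * ‖D‖ ^ 2)
        (cl / 2 * (2 * s) * ‖D‖ ^ 2) s := by
      have := ((hasDerivAt_pow 2 s).const_mul (cl / 2)).mul_const (‖D‖ ^ 2)
      simpa [mul_comm, mul_assoc, pow_one] using this
    exact (h2.sub h3).sub h4
  have hanti : AntitoneOn f (Set.Icc (0:ℝ) 1) := by
    refine antitoneOn_of_deriv_nonpos (convex_Icc 0 1)
      (fun s _ => ((hderiv s).differentiableAt.continuousAt).continuousWithinAt)
      (fun s _ => (hderiv s).differentiableAt.differentiableWithinAt) ?_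
    intro s hs
    rw [interior_Icc] at hs
    rw [(hderiv s).deriv]
    have key : frobCLM (G (Y + s • D)) D - c1 ≤ cl * s * ‖D‖ ^ 2 := by
      have : frobCLM (G (Y + s • D)) D - c1 = ((G (Y + s • D) - G Y)ᵀ * D).trace := by
        rw [frobCLM_apply, hc1, Matrix.transpose_sub, Matrix.sub_mul, Matrix.trace_sub]
      rw [this]
      calc ((G (Y + s • D) - G Y)ᵀ * D).trace ≤ ‖G (Y + s • D) - G Y‖ * ‖D‖ :=
            bcpsi_trace_le _ _
        _ ≤ (cl * ‖(Y + s • D) - Y‖) * ‖D‖ := by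
            exact mul_le_mul_of_nonneg_right (hlip _ _) (norm_nonneg _)
        _ = cl * s * ‖D‖ ^ 2 := by
            simp [norm_smul, Real.norm_eq_abs, abs_of_pos hs.1, sq]
            ring
    nlinarith [sq_nonneg ‖D‖]
  have h01 : (0:ℝ) ∈ Set.Icc (0:ℝ) 1 := by norm_num
  have h11 : (1:ℝ) ∈ Set.Icc (0:ℝ) 1 := by norm_num
  have := hanti h01 h11 (by norm_num)
  simp only [hf, zero_smul, add_zero, one_smul, zero_mul, sub_zero, zero_pow, mul_zero,
    one_pow, mul_one, one_mul] at this
  have hZ : Y + D = Z := by rw [hD]; abel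
  rw [hZ] at this
  linarith

lemma bcpsi_hasDerivAt_mul_transpose {m n r : ℕ} (U : Matrix (Fin m) (Fin r) ℝ)
    (L : ℝ → Matrix (Fin n) (Fin r) ℝ) (D : Matrix (Fin n) (Fin r) ℝ) (t : ℝ)
    (hD : HasDerivAt L D t) :
    HasDerivAt (fun t => U * (L t)ᵀ) (U * Dᵀ) t := by
  let clm : Matrix (Fin n) (Fin r) ℝ →L[ℝ] Matrix (Fin m) (Fin n) ℝ :=
    LinearMap.toContinuousLinearMap
      { toFun := fun M => U * Mᵀ
        map_add' := by intro x y; simp [Matrix.transpose_add, Matrix.mul_add]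
        map_smul' := by intro c x; simp [Matrix.transpose_smul, Matrix.mul_smul] }
  exact clm.hasFDerivAt.comp_hasDerivAt t hD

/-- Flow step: the loss decreases along the gradient flow at rate at least `αL²`. -/
lemma bcpsi_flow {m n r : ℕ}
    (ℓ : Matrix (Fin m) (Fin n) ℝ → ℝ)
    (G : Matrix (Fin m) (Fin n) ℝ → Matrix (Fin m) (Fin n) ℝ)
    (hgrad : ∀ Y, HasFDerivAt ℓ (frobCLM (G Y)) Y)
    (t0 t1 h : ℝ) (hh : 0 < h) (ht1 : t1 = t0 + h)
    (U1 : Matrix (Fin m) (Fin r) ℝ)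
    (L : ℝ → Matrix (Fin n) (Fin r) ℝ)
    (hL : ∀ t ∈ Set.Icc t0 t1, HasDerivAt L (-((G (U1 * (L t)ᵀ))ᵀ * U1)) t)
    (αL : ℝ)
    (hαL : IsLeast ((fun s => ‖(G (U1 * (L s)ᵀ))ᵀ * U1‖) '' Set.Icc t0 t1) αL) :
    ℓ (U1 * (L t1)ᵀ) ≤ ℓ (U1 * (L t0)ᵀ) - h * αL ^ 2 := by
  have ht01 : t0 ≤ t1 := by linarith
  have hα0 : 0 ≤ αL := by
    obtain ⟨s, _, hs⟩ := hαL.1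
    rw [← hs]; exact norm_nonneg _
  set g : ℝ → ℝ := fun t => ℓ (U1 * (L t)ᵀ) + αL ^ 2 * (t - t0) with hg
  have hderiv : ∀ t ∈ Set.Icc t0 t1, HasDerivAt g
      (-‖(G (U1 * (L t)ᵀ))ᵀ * U1‖ ^ 2 + αL ^ 2) t := by
    intro t ht
    set Gt := G (U1 * (L t)ᵀ) with hGt
    have h1 : HasDerivAt (fun t => U1 * (L t)ᵀ) (U1 * (-(Gtᵀ * U1))ᵀ) t :=
      bcpsi_hasDerivAt_mul_transpose U1 L _ t (hL t ht)
    have h2 : HasDerivAt (fun t => ℓ (U1 * (L t)ᵀ))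
        (frobCLM Gt (U1 * (-(Gtᵀ * U1))ᵀ)) t :=
      (hgrad (U1 * (L t)ᵀ)).comp_hasDerivAt t h1
    have hval : frobCLM Gt (U1 * (-(Gtᵀ * U1))ᵀ) = -‖Gtᵀ * U1‖ ^ 2 := by
      rw [frobCLM_apply]
      have : U1 * (-(Gtᵀ * U1))ᵀ = -(U1 * (U1ᵀ * Gt)) := by
        simp [Matrix.transpose_mul, Matrix.mul_neg]
      rw [this, Matrix.mul_neg, Matrix.trace_neg]
      congr 1
      have : Gtᵀ * (U1 * (U1ᵀ * Gt)) = (Gtᵀ * U1) * (Gtᵀ * U1)ᵀ := by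
        simp [Matrix.transpose_mul, Matrix.mul_assoc]
      rw [this, Matrix.trace_mul_comm, bcpsi_trace_transpose_mul_self]
    rw [hval] at h2
    have h3 : HasDerivAt (fun t : ℝ => αL ^ 2 * (t - t0)) (αL ^ 2) t := by
      simpa using ((hasDerivAt_id t).sub_const t0).const_mul (αL ^ 2)
    exact h2.add h3
  have hanti : AntitoneOn g (Set.Icc t0 t1) := by
    refine antitoneOn_of_deriv_nonpos (convex_Icc t0 t1)
      (fun t ht => ((hderiv t ht).differentiableAt.continuousAt).continuousWithinAt)
      (fun t ht => (hderiv t (interior_subset ht)).differentiableAt.differentiableWithinAt) ?_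
    intro t ht
    have ht' : t ∈ Set.Icc t0 t1 := interior_subset ht
    rw [(hderiv t ht').deriv]
    have hle : αL ≤ ‖(G (U1 * (L t)ᵀ))ᵀ * U1‖ := hαL.2 ⟨t, ht', rfl⟩
    nlinarith
  have := hanti ⟨le_refl t0, ht01⟩ ⟨ht01, le_refl t1⟩ ht01
  simp only [hg] at this
  have hsub : t1 - t0 = h := by linarith
  rw [hsub] at this
  linarith [this]

/-- Loss evaluation of the backward-corrected PSI: with `Y0 = U0 S0 V0ᵀ`,
`S̄1 = U1ᵀ U0 S0`, and the L-step started at `V0 S̄1ᵀ`,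
`ℓ(Y(t1)) ≤ ℓ(Y0) + B‖(I − U1U1ᵀ)Y0‖ + (c_l/2)‖(I − U1U1ᵀ)Y0‖² − h αL²`. -/
theorem bcpsi_loss_evaluation {m n r : ℕ}
    (ℓ : Matrix (Fin m) (Fin n) ℝ → ℝ)
    (G : Matrix (Fin m) (Fin n) ℝ → Matrix (Fin m) (Fin n) ℝ)
    (hgrad : ∀ Y, HasFDerivAt ℓ (frobCLM (G Y)) Y)
    (cl B : ℝ) (hcl : 0 < cl) (hB : 0 < B)
    (hlip : ∀ Z1 Z2, ‖G Z1 - G Z2‖ ≤ cl * ‖Z1 - Z2‖)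
    (hbound : ∀ Z, ‖G Z‖ ≤ B)
    (t0 t1 h : ℝ) (hh : 0 < h) (ht1 : t1 = t0 + h)
    (U0 : Matrix (Fin m) (Fin r) ℝ) (hU0 : U0ᵀ * U0 = 1)
    (U1 : Matrix (Fin m) (Fin r) ℝ) (hU1 : U1ᵀ * U1 = 1)
    (V0 : Matrix (Fin n) (Fin r) ℝ) (hV0 : V0ᵀ * V0 = 1)
    (S0 : Matrix (Fin r) (Fin r) ℝ)
    (L : ℝ → Matrix (Fin n) (Fin r) ℝ)
    (hL : ∀ t ∈ Set.Icc t0 t1, HasDerivAt L (-((G (U1 * (L t)ᵀ))ᵀ * U1)) t)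
    (hL0 : L t0 = V0 * (U1ᵀ * U0 * S0)ᵀ)
    (αL : ℝ)
    (hαL : IsLeast ((fun s => ‖(G (U1 * (L s)ᵀ))ᵀ * U1‖) '' Set.Icc t0 t1) αL) :
    ℓ (U1 * (L t1)ᵀ) ≤ ℓ (U0 * S0 * V0ᵀ)
      + B * ‖(1 - U1 * U1ᵀ) * (U0 * S0 * V0ᵀ)‖
      + cl / 2 * ‖(1 - U1 * U1ᵀ) * (U0 * S0 * V0ᵀ)‖ ^ 2
      - h * αL ^ 2 := by
  set Y0 := U0 * S0 * V0ᵀ with hY0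
  -- the initial point of the flow is the projection of Y0
  have hP0 : U1 * (L t0)ᵀ = U1 * U1ᵀ * Y0 := by
    rw [hL0, hY0]
    simp [Matrix.transpose_mul, Matrix.mul_assoc]
  -- difference equals minus the projection complement
  have hDiff : U1 * U1ᵀ * Y0 - Y0 = -((1 - U1 * U1ᵀ) * Y0) := by
    rw [Matrix.sub_mul, Matrix.one_mul, neg_sub]
  -- descent lemma at the projected point
  have hdesc := bcpsi_descent ℓ G hgrad cl hlip Y0 (U1 * U1ᵀ * Y0)
  rw [hDiff] at hdesc
  have htr : ((G Y0)ᵀ * -((1 - U1 * U1ᵀ) * Y0)).trace ≤ B * ‖(1 - U1 * U1ᵀ) * Y0‖ := by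
    calc ((G Y0)ᵀ * -((1 - U1 * U1ᵀ) * Y0)).trace
        ≤ ‖G Y0‖ * ‖-((1 - U1 * U1ᵀ) * Y0)‖ := bcpsi_trace_le _ _
      _ = ‖G Y0‖ * ‖(1 - U1 * U1ᵀ) * Y0‖ := by rw [norm_neg]
      _ ≤ B * ‖(1 - U1 * U1ᵀ) * Y0‖ :=
          mul_le_mul_of_nonneg_right (hbound _) (norm_nonneg _)
  rw [norm_neg] at hdesc
  -- flow step
  have hflow := bcpsi_flow ℓ G hgrad t0 t1 h hh ht1 U1 L hL αL hαL
  rw [hP0] at hflow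
  linarith
end

section
/- (Local robust error bound of the abc-PSI, before truncation.) Let h > 0, t1 = t0 + h. Assume ∇ℓ is Lipschitz with constant c_l > 0 and bounded by B > 0 in Frobenius norm. Let U0 ∈ ℝ^{m×r}, V0 ∈ ℝ^{n×r} have orthonormal columns, S0 ∈ ℝ^{r×r}, Y0 = U0 S0 V0ᵀ, and assume the residual bound ‖∇ℓ(Y0) − P(Y0)∇ℓ(Y0)‖ ≤ ε, where P(Y0)G = U0U0ᵀG − U0U0ᵀG V0V0ᵀ + G V0V0ᵀ. Let W : [t0,t1] → ℝ^{m×n} satisfy the full gradient flow W'(t) = −∇ℓ(W(t)) with W(t0) = Y0. Let K : [t0,t1] → ℝ^{m×r} satisfy K'(t) = −∇ℓ(K(t)V0ᵀ)V0 with K(t0) = U0 S0; let Û1 ∈ ℝ^{m×2r} have orthonormal columns with Û1 Û1ᵀ U0 = U0 and Û1 Û1ᵀ K(t1) = K(t1); and let L : [t0,t1] → ℝ^{n×2r} satisfy L'(t) = −∇ℓ(Û1 L(t)ᵀ)ᵀ Û1 with L(t0) = V0 S0ᵀ U0ᵀ Û1. Then the one-step abc-PSI output Ŷ1 := Û1 L(t1)ᵀ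 satisfies ‖Ŷ1 − W(t1)‖ ≤ 3 c_l B h² + h ε. -/
open Matrix Set MeasureTheory Filter

attribute [local instance] Matrix.frobeniusNormedAddCommGroup Matrix.frobeniusNormedSpace

lemma frob_norm_sq {m n : ℕ} (A : Matrix (Fin m) (Fin n) ℝ) :
    ‖A‖ ^ 2 = (Aᵀ * A).trace := by
  rw [Matrix.frobenius_norm_def]
  rw [← Real.rpow_natCast _ 2, ← Real.rpow_mul (by positivity)]
  norm_num
  rw [Matrix.trace, Finset.sum_comm]
  simp [Matrix.diag, Matrix.mul_apply, sq_abs, sq]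

lemma frob_mul_isometry {k m n : ℕ} (Q : Matrix (Fin m) (Fin k) ℝ) (hQ : Qᵀ * Q = 1)
    (N : Matrix (Fin k) (Fin n) ℝ) : ‖Q * N‖ = ‖N‖ := by
  have h1 : ‖Q * N‖ ^ 2 = ‖N‖ ^ 2 := by
    rw [frob_norm_sq, frob_norm_sq, Matrix.transpose_mul, Matrix.mul_assoc,
      ← Matrix.mul_assoc Qᵀ, hQ, Matrix.one_mul]
  have := norm_nonneg (Q * N); have := norm_nonneg N; nlinarith

lemma frob_pythagoras {k m n : ℕ} (Q : Matrix (Fin m) (Fin k) ℝ) (hQ : Qᵀ * Q = 1)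
    (M : Matrix (Fin m) (Fin n) ℝ) :
    ‖M‖ ^ 2 = ‖Q * (Qᵀ * M)‖ ^ 2 + ‖M - Q * (Qᵀ * M)‖ ^ 2 := by
  have key : (Q * (Qᵀ * M))ᵀ * (Q * (Qᵀ * M)) = Mᵀ * (Q * (Qᵀ * M)) := by
    rw [Matrix.transpose_mul, Matrix.transpose_mul, Matrix.transpose_transpose,
      Matrix.mul_assoc, Matrix.mul_assoc, ← Matrix.mul_assoc Qᵀ Q, hQ, Matrix.one_mul]
  have key2 : (Q * (Qᵀ * M))ᵀ * M = Mᵀ * (Q * (Qᵀ * M)) := by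
    rw [Matrix.transpose_mul, Matrix.transpose_mul, Matrix.transpose_transpose,
      Matrix.mul_assoc]
    rw [Matrix.mul_assoc]
  rw [frob_norm_sq, frob_norm_sq, frob_norm_sq]
  rw [Matrix.transpose_sub, Matrix.sub_mul, Matrix.mul_sub, Matrix.mul_sub, key, key2]
  simp only [Matrix.trace_sub, Matrix.trace_add]
  ring

lemma frob_proj_le {k m n : ℕ} (Q : Matrix (Fin m) (Fin k) ℝ) (hQ : Qᵀ * Q = 1)
    (M : Matrix (Fin m) (Fin n) ℝ) : ‖Q * (Qᵀ * M)‖ ≤ ‖M‖ := by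
  have := frob_pythagoras Q hQ M
  have := norm_nonneg (Q * (Qᵀ * M)); have := norm_nonneg M
  have := norm_nonneg (M - Q * (Qᵀ * M)); nlinarith

lemma frob_compl_le {k m n : ℕ} (Q : Matrix (Fin m) (Fin k) ℝ) (hQ : Qᵀ * Q = 1)
    (M : Matrix (Fin m) (Fin n) ℝ) : ‖M - Q * (Qᵀ * M)‖ ≤ ‖M‖ := by
  have := frob_pythagoras Q hQ M
  have := norm_nonneg (Q * (Qᵀ * M)); have := norm_nonneg M
  have := norm_nonneg (M - Q * (Qᵀ * M)); nlinarith

lemma frob_transpose_mul_le {k m n : ℕ} (Q : Matrix (Fin m) (Fin k) ℝ) (hQ : Qᵀ * Q = 1)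
    (M : Matrix (Fin m) (Fin n) ℝ) : ‖Qᵀ * M‖ ≤ ‖M‖ := by
  rw [← frob_mul_isometry Q hQ (Qᵀ * M)]; exact frob_proj_le Q hQ M

lemma frob_mul_right_le {k m n : ℕ} (V : Matrix (Fin n) (Fin k) ℝ) (hV : Vᵀ * V = 1)
    (M : Matrix (Fin m) (Fin n) ℝ) : ‖M * V‖ ≤ ‖M‖ := by
  rw [← Matrix.frobenius_norm_transpose, Matrix.transpose_mul,
    ← Matrix.frobenius_norm_transpose M]
  exact frob_transpose_mul_le V hV Mᵀ

lemma frob_mul_right_tr {k m n : ℕ} (V : Matrix (Fin n) (Fin k) ℝ) (hV : Vᵀ * V = 1)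
    (M : Matrix (Fin m) (Fin k) ℝ) : ‖M * Vᵀ‖ = ‖M‖ := by
  rw [← Matrix.frobenius_norm_transpose, Matrix.transpose_mul, Matrix.transpose_transpose,
    frob_mul_isometry V hV, Matrix.frobenius_norm_transpose]

lemma hasDerivAt_matrix_const_mul {p q s : ℕ} (A : Matrix (Fin s) (Fin p) ℝ)
    {f : ℝ → Matrix (Fin p) (Fin q) ℝ} {f' : Matrix (Fin p) (Fin q) ℝ} {t : ℝ}
    (hf : HasDerivAt f f' t) : HasDerivAt (fun u => A * f u) (A * f') t := by
  have h := ((LinearMap.toContinuousLinearMap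
      { toFun := fun X : Matrix (Fin p) (Fin q) ℝ => A * X
        map_add' := by intro x y; simp [Matrix.mul_add]
        map_smul' := by intro c x; simp [Matrix.mul_smul] }).hasFDerivAt).comp_hasDerivAt t hf
  exact h

lemma hasDerivAt_matrix_mul_transpose {p q s : ℕ} (A : Matrix (Fin s) (Fin q) ℝ)
    {f : ℝ → Matrix (Fin p) (Fin q) ℝ} {f' : Matrix (Fin p) (Fin q) ℝ} {t : ℝ}
    (hf : HasDerivAt f f' t) : HasDerivAt (fun u => A * (f u)ᵀ) (A * f'ᵀ) t := by
  have h := ((LinearMap.toContinuousLinearMap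
      { toFun := fun X : Matrix (Fin p) (Fin q) ℝ => A * Xᵀ
        map_add' := by intro x y; simp [Matrix.transpose_add, Matrix.mul_add]
        map_smul' := by intro c x; simp [Matrix.transpose_smul, Matrix.mul_smul] }).hasFDerivAt).comp_hasDerivAt t hf
  exact h

set_option maxHeartbeats 1600000 in
/-- Local robust error bound of the abc-PSI, before truncation:
`‖Ŷ1 − W(t1)‖ ≤ 3 c_l B h² + h ε`, where `Ŷ1 = Û1 L(t1)ᵀ` is the one-step abc-PSI output
and `W` solves the full gradient flow started at `Y0 = U0 S0 V0ᵀ`. -/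
theorem abcpsi_local_error_bound {m n r : ℕ}
    (ℓ : Matrix (Fin m) (Fin n) ℝ → ℝ)
    (G : Matrix (Fin m) (Fin n) ℝ → Matrix (Fin m) (Fin n) ℝ)
    (hgrad : ∀ Y, HasFDerivAt ℓ (frobCLM (G Y)) Y)
    (cl B ε : ℝ) (hcl : 0 < cl) (hB : 0 < B)
    (hlip : ∀ Z1 Z2, ‖G Z1 - G Z2‖ ≤ cl * ‖Z1 - Z2‖)
    (hbound : ∀ Z, ‖G Z‖ ≤ B)
    (t0 t1 h : ℝ) (hh : 0 < h) (ht1 : t1 = t0 + h)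
    (U0 : Matrix (Fin m) (Fin r) ℝ) (hU0 : U0ᵀ * U0 = 1)
    (V0 : Matrix (Fin n) (Fin r) ℝ) (hV0 : V0ᵀ * V0 = 1)
    (S0 : Matrix (Fin r) (Fin r) ℝ)
    -- residual bound at Y0 = U0 S0 V0ᵀ
    (hres : ‖G (U0 * S0 * V0ᵀ) -
        (U0 * U0ᵀ * G (U0 * S0 * V0ᵀ) - U0 * U0ᵀ * G (U0 * S0 * V0ᵀ) * (V0 * V0ᵀ)
          + G (U0 * S0 * V0ᵀ) * (V0 * V0ᵀ))‖ ≤ ε)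
    -- full gradient flow
    (W : ℝ → Matrix (Fin m) (Fin n) ℝ)
    (hW : ∀ t ∈ Set.Icc t0 t1, HasDerivAt W (-(G (W t))) t)
    (hW0 : W t0 = U0 * S0 * V0ᵀ)
    -- K-step
    (K : ℝ → Matrix (Fin m) (Fin r) ℝ)
    (hK : ∀ t ∈ Set.Icc t0 t1, HasDerivAt K (-(G (K t * V0ᵀ) * V0)) t)
    (hK0 : K t0 = U0 * S0)
    -- augmented basis
    (Uhat1 : Matrix (Fin m) (Fin (2 * r)) ℝ) (hUhat1 : Uhat1ᵀ * Uhat1 = 1)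
    (hspanU0 : Uhat1 * Uhat1ᵀ * U0 = U0)
    (hspanK : Uhat1 * Uhat1ᵀ * K t1 = K t1)
    -- L-step
    (L : ℝ → Matrix (Fin n) (Fin (2 * r)) ℝ)
    (hL : ∀ t ∈ Set.Icc t0 t1, HasDerivAt L (-((G (Uhat1 * (L t)ᵀ))ᵀ * Uhat1)) t)
    (hL0 : L t0 = V0 * S0ᵀ * U0ᵀ * Uhat1) :
    ‖Uhat1 * (L t1)ᵀ - W t1‖ ≤ 3 * cl * B * h ^ 2 + h * ε := by
  have ht0le : t0 ≤ t1 := by rw [ht1]; linarith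
  have ht1mem : t1 ∈ Set.Icc t0 t1 := ⟨ht0le, le_refl _⟩
  set Y0 : Matrix (Fin m) (Fin n) ℝ := U0 * S0 * V0ᵀ with hY0
  set G0 : Matrix (Fin m) (Fin n) ℝ := G Y0 with hG0
  -- absorption of U0-range by Uhat1
  have habs : ∀ q : ℕ, ∀ X : Matrix (Fin r) (Fin q) ℝ,
      Uhat1 * (Uhat1ᵀ * (U0 * X)) = U0 * X := by
    intro q X
    calc Uhat1 * (Uhat1ᵀ * (U0 * X)) = Uhat1 * Uhat1ᵀ * U0 * X := by
          simp only [Matrix.mul_assoc]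
      _ = U0 * X := by rw [hspanU0]
  -- W stays close to Y0
  have hWd : ∀ t ∈ Set.Icc t0 t1, ‖W t - W t0‖ ≤ B * (t - t0) := by
    apply norm_image_sub_le_of_norm_deriv_le_segment'
      (f' := fun t => -(G (W t)))
    · exact fun t ht => (hW t ht).hasDerivWithinAt
    · intro t ht; rw [norm_neg]; exact hbound _
  -- K stays close to K t0
  have hKd : ∀ t ∈ Set.Icc t0 t1, ‖K t - K t0‖ ≤ B * (t - t0) := by
    apply norm_image_sub_le_of_norm_deriv_le_segment'
      (f' := fun t => -(G (K t * V0ᵀ) * V0))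
    · exact fun t ht => (hK t ht).hasDerivWithinAt
    · intro t ht; rw [norm_neg]
      exact le_trans (frob_mul_right_le V0 hV0 _) (hbound _)
  -- the approximate flow Ŷ
  set Yh : ℝ → Matrix (Fin m) (Fin n) ℝ := fun t => Uhat1 * (L t)ᵀ with hYh
  have hYhd : ∀ t ∈ Set.Icc t0 t1,
      HasDerivAt Yh (-(Uhat1 * (Uhat1ᵀ * G (Yh t)))) t := by
    intro t ht
    have := hasDerivAt_matrix_mul_transpose Uhat1 (hL t ht)
    convert this using 1
    rw [Matrix.transpose_neg, Matrix.transpose_mul, Matrix.transpose_transpose,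
      Matrix.mul_neg]
  have hYh0 : Yh t0 = Y0 := by
    show Uhat1 * (L t0)ᵀ = Y0
    rw [hL0]
    have : (V0 * S0ᵀ * U0ᵀ * Uhat1)ᵀ = Uhat1ᵀ * (U0 * (S0 * V0ᵀ)) := by
      simp [Matrix.transpose_mul, Matrix.mul_assoc]
    rw [this, habs, hY0, Matrix.mul_assoc]
  have hYhdist : ∀ t ∈ Set.Icc t0 t1, ‖Yh t - Y0‖ ≤ B * (t - t0) := by
    rw [← hYh0]
    apply norm_image_sub_le_of_norm_deriv_le_segment'
      (f' := fun t => -(Uhat1 * (Uhat1ᵀ * G (Yh t))))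
    · exact fun t ht => (hYhd t ht).hasDerivWithinAt
    · intro t ht; rw [norm_neg]
      exact le_trans (frob_proj_le Uhat1 hUhat1 _) (hbound _)
  -- bound on ‖(1-P̂)(G0 V0)‖
  set Cm : Matrix (Fin m) (Fin r) ℝ := G0 * V0 - Uhat1 * (Uhat1ᵀ * (G0 * V0)) with hCm
  have hCbound : ‖Cm‖ ≤ cl * B * h := by
    set g : ℝ → Matrix (Fin m) (Fin r) ℝ :=
      fun t => (K t - Uhat1 * (Uhat1ᵀ * K t)) + (t - t0) • Cm with hgdef
    have hgd : ∀ t ∈ Set.Icc t0 t1, HasDerivAt g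
        ((-(G (K t * V0ᵀ) * V0) - Uhat1 * (Uhat1ᵀ * -(G (K t * V0ᵀ) * V0))) + Cm) t := by
      intro t ht
      have h1 := (hK t ht).sub (hasDerivAt_matrix_const_mul Uhat1
        (hasDerivAt_matrix_const_mul Uhat1ᵀ (hK t ht)))
      have h2 : HasDerivAt (fun u : ℝ => (u - t0) • Cm) Cm t := by
        have := (((hasDerivAt_id t).sub_const t0).smul_const Cm)
        simp only [id, one_smul] at this
        exact this
      exact h1.add h2
    have hgbound : ∀ t ∈ Set.Ico t0 t1,
        ‖(-(G (K t * V0ᵀ) * V0) - Uhat1 * (Uhat1ᵀ * -(G (K t * V0ᵀ) * V0))) + Cm‖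
          ≤ cl * B * h := by
      intro t ht
      have hmem : t ∈ Set.Icc t0 t1 := ⟨ht.1, le_of_lt ht.2⟩
      have hEq : (-(G (K t * V0ᵀ) * V0) - Uhat1 * (Uhat1ᵀ * -(G (K t * V0ᵀ) * V0))) + Cm
          = (G0 * V0 - G (K t * V0ᵀ) * V0)
            - Uhat1 * (Uhat1ᵀ * (G0 * V0 - G (K t * V0ᵀ) * V0)) := by
        rw [hCm]
        simp only [Matrix.mul_neg, Matrix.mul_sub]
        abel
      rw [hEq]
      have h3 : ‖G0 * V0 - G (K t * V0ᵀ) * V0‖ ≤ cl * B * h := by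
        rw [← Matrix.sub_mul]
        refine le_trans (frob_mul_right_le V0 hV0 _) ?_
        refine le_trans (hlip _ _) ?_
        have hYKV : Y0 - K t * V0ᵀ = (K t0 - K t) * V0ᵀ := by
          rw [Matrix.sub_mul, hK0, hY0]
        rw [hYKV, frob_mul_right_tr V0 hV0, norm_sub_rev]
        have := hKd t hmem
        have htd : t - t0 ≤ h := by
          have := ht.2; rw [ht1] at this; linarith
        have hBt : B * (t - t0) ≤ B * h := by nlinarith [ht.1]
        nlinarith
      exact le_trans (frob_compl_le Uhat1 hUhat1 _) h3
    have key := norm_image_sub_le_of_norm_deriv_le_segment'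
      (fun t ht => (hgd t ht).hasDerivWithinAt) hgbound t1 ht1mem
    have hgt0 : g t0 = 0 := by
      show (K t0 - Uhat1 * (Uhat1ᵀ * K t0)) + (t0 - t0) • Cm = 0
      rw [hK0, habs r S0]
      simp
    have hgt1 : g t1 = h • Cm := by
      show (K t1 - Uhat1 * (Uhat1ᵀ * K t1)) + (t1 - t0) • Cm = h • Cm
      have : Uhat1 * (Uhat1ᵀ * K t1) = K t1 := by
        rw [← Matrix.mul_assoc]; exact hspanK
      rw [this, ht1]
      simp
    rw [hgt0, hgt1, sub_zero, norm_smul] at key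
    simp only [Real.norm_eq_abs, abs_of_pos hh] at key
    have ht1t0 : t1 - t0 = h := by rw [ht1]; ring
    rw [ht1t0] at key
    nlinarith
  -- bound on ‖(1-P̂)G0‖
  have hR : ‖G0 - Uhat1 * (Uhat1ᵀ * G0)‖ ≤ ε + cl * B * h := by
    set Rm : Matrix (Fin m) (Fin n) ℝ :=
      G0 - (U0 * U0ᵀ * G0 - U0 * U0ᵀ * G0 * (V0 * V0ᵀ) + G0 * (V0 * V0ᵀ)) with hRm
    have hid : G0 - Uhat1 * (Uhat1ᵀ * G0)
        = (Rm - Uhat1 * (Uhat1ᵀ * Rm)) + Cm * V0ᵀ := by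
      rw [hRm, hCm]
      simp only [Matrix.mul_sub, Matrix.mul_add, Matrix.sub_mul, Matrix.add_mul]
      simp only [Matrix.mul_assoc]
      rw [habs n (U0ᵀ * G0), habs n (U0ᵀ * (G0 * (V0 * V0ᵀ)))]
      abel
    rw [hid]
    refine le_trans (norm_add_le _ _) ?_
    have h1 : ‖Rm - Uhat1 * (Uhat1ᵀ * Rm)‖ ≤ ε :=
      le_trans (frob_compl_le Uhat1 hUhat1 _) hres
    have h2 : ‖Cm * V0ᵀ‖ ≤ cl * B * h := by
      rw [frob_mul_right_tr V0 hV0]; exact hCbound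
    linarith
  -- main estimate
  set F : ℝ → Matrix (Fin m) (Fin n) ℝ := fun t => Yh t - W t with hF
  have hFd : ∀ t ∈ Set.Icc t0 t1, HasDerivAt F
      (G (W t) - Uhat1 * (Uhat1ᵀ * G (Yh t))) t := by
    intro t ht
    have := (hYhd t ht).sub (hW t ht)
    convert this using 1
    · rfl
    · rfl
    · rfl
    · rfl
    · abel
  have hFbound : ∀ t ∈ Set.Ico t0 t1,
      ‖G (W t) - Uhat1 * (Uhat1ᵀ * G (Yh t))‖ ≤ 3 * cl * B * h + ε := by
    intro t ht
    have hmem : t ∈ Set.Icc t0 t1 := ⟨ht.1, le_of_lt ht.2⟩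
    have htd : t - t0 ≤ h := by
      have := ht.2; rw [ht1] at this; linarith
    have htd0 : 0 ≤ t - t0 := by linarith [ht.1]
    have hEq : G (W t) - Uhat1 * (Uhat1ᵀ * G (Yh t))
        = ((G (W t) - G0) - Uhat1 * (Uhat1ᵀ * (G (Yh t) - G0)))
          + (G0 - Uhat1 * (Uhat1ᵀ * G0)) := by
      simp only [Matrix.mul_sub]
      abel
    rw [hEq]
    refine le_trans (norm_add_le _ _) ?_
    have h1 : ‖G (W t) - G0‖ ≤ cl * (B * h) := by
      refine le_trans (hlip _ _) ?_
      have hWY : W t - Y0 = W t - W t0 := by rw [hW0, hY0]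
      rw [hWY]
      have h0 := hWd t hmem
      have hBt : B * (t - t0) ≤ B * h := by nlinarith
      nlinarith
    have h2 : ‖Uhat1 * (Uhat1ᵀ * (G (Yh t) - G0))‖ ≤ cl * (B * h) := by
      refine le_trans (frob_proj_le Uhat1 hUhat1 _) ?_
      refine le_trans (hlip _ _) ?_
      have h0 := hYhdist t hmem
      have hBt : B * (t - t0) ≤ B * h := by nlinarith
      nlinarith
    have h3 := le_trans (norm_sub_le _ _) (add_le_add h1 h2)
    linarith [hR, le_trans (norm_sub_le _ _) (add_le_add h1 h2)]
  have key := norm_image_sub_le_of_norm_deriv_le_segment'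
    (fun t ht => (hFd t ht).hasDerivWithinAt) hFbound t1 ht1mem
  have hFt0 : F t0 = 0 := by
    show Yh t0 - W t0 = 0
    rw [hYh0, hW0, hY0]; simp
  rw [hFt0, sub_zero] at key
  have ht1t0 : t1 - t0 = h := by rw [ht1]; ring
  rw [ht1t0] at key
  have : F t1 = Uhat1 * (L t1)ᵀ - W t1 := rfl
  rw [← this]
  nlinarith [key]
end

section
/- (Convergence of the abc-PSI, deterministic form.) Assume ℓ ≥ 0, ∇ℓ is Lipschitz with constant c_l > 0 and bounded by B > 0 in Frobenius norm. Let (Y_t)_{t≥0} be a sequence in ℝ^{m×n}, let (h_t)_{t≥1} be positive step sizes satisfying the Robbins–Monro conditions Σ_{t=1}^∞ h_t = ∞ and Σ_{t=1}^∞ h_t² < ∞, and let (d_t)_{t≥1} be nonnegative reals with Σ_{t=1}^∞ d_t ≤ D < ∞. Suppose that for every t ≥ 1 the descent inequality ℓ(Y_t) ≤ ℓ(Y_{t−1}) − h_t (1 − c_l h_t / 2) g_{t−1}² + c_l d_t holds, where g_{t−1} := ‖P(Y_{t−1}) ∇ℓ(Y_{t−1})‖ ≤ B. Then liminf_{t→∞}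 g_t² = 0. -/
open Matrix Set MeasureTheory Filter

attribute [local instance] Matrix.frobeniusNormedAddCommGroup Matrix.frobeniusNormedSpace

/-- Convergence of the abc-PSI, deterministic form: under the Robbins–Monro
step-size conditions and the per-step descent inequality with summable perturbations,
`liminf g_t² = 0`, where `g_t = ‖P(Y_t)∇ℓ(Y_t)‖ ≤ B` is the projected gradient norm. -/
theorem abcpsi_convergence {m n : ℕ}
    (ℓ : Matrix (Fin m) (Fin n) ℝ → ℝ)
    (G : Matrix (Fin m) (Fin n) ℝ → Matrix (Fin m) (Fin n) ℝ)
    (hgrad : ∀ Y, HasFDerivAt ℓ (frobCLM (G Y)) Y)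
    (cl B D : ℝ) (hcl : 0 < cl) (hB : 0 < B)
    (hnonneg : ∀ Z, 0 ≤ ℓ Z)
    (hlip : ∀ Z1 Z2, ‖G Z1 - G Z2‖ ≤ cl * ‖Z1 - Z2‖)
    (hbound : ∀ Z, ‖G Z‖ ≤ B)
    (Y : ℕ → Matrix (Fin m) (Fin n) ℝ)
    (h : ℕ → ℝ) (hpos : ∀ t, 0 < h (t + 1))
    (hRM1 : Filter.Tendsto (fun T => ∑ t ∈ Finset.range T, h (t + 1)) Filter.atTop
      Filter.atTop)
    (hRM2 : Summable fun t => h (t + 1) ^ 2)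
    (d : ℕ → ℝ) (hd0 : ∀ t, 0 ≤ d (t + 1))
    (hdD : ∀ T, ∑ t ∈ Finset.range T, d (t + 1) ≤ D)
    (g : ℕ → ℝ) (hg0 : ∀ t, 0 ≤ g t) (hgB : ∀ t, g t ≤ B)
    (hdesc : ∀ t : ℕ, ℓ (Y (t + 1)) ≤
      ℓ (Y t) - h (t + 1) * (1 - cl * h (t + 1) / 2) * g t ^ 2 + cl * d (t + 1)) :
    Filter.liminf (fun t => g t ^ 2) Filter.atTop = 0 := by

  -- Step 1: partial sums of `h (t+1) * g t ^ 2` are bounded.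
  have hsum : ∀ T, ∑ t ∈ Finset.range T, h (t + 1) * g t ^ 2 ≤
      ℓ (Y 0) + cl / 2 * B ^ 2 * (∑' t, h (t + 1) ^ 2) + cl * D := by
    intro T
    have h1 : ∀ t ∈ Finset.range T, h (t + 1) * g t ^ 2 ≤
        (ℓ (Y t) - ℓ (Y (t + 1))) + cl / 2 * B ^ 2 * h (t + 1) ^ 2 + cl * d (t + 1) := by
      intro t _
      have hd := hdesc t
      have hg2 : g t ^ 2 ≤ B ^ 2 := by nlinarith [hgB t, hg0 t]
      have hh := (hpos t).le
      nlinarith [mul_nonneg (by positivity : (0:ℝ) ≤ cl / 2 * h (t + 1) ^ 2)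
        (sub_nonneg.2 hg2)]
    calc ∑ t ∈ Finset.range T, h (t + 1) * g t ^ 2
        ≤ ∑ t ∈ Finset.range T, ((ℓ (Y t) - ℓ (Y (t + 1)))
            + cl / 2 * B ^ 2 * h (t + 1) ^ 2 + cl * d (t + 1)) :=
          Finset.sum_le_sum h1
      _ = (ℓ (Y 0) - ℓ (Y T)) + cl / 2 * B ^ 2 * (∑ t ∈ Finset.range T, h (t + 1) ^ 2)
            + cl * (∑ t ∈ Finset.range T, d (t + 1)) := by
          rw [Finset.sum_add_distrib, Finset.sum_add_distrib, Finset.sum_range_sub',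
            ← Finset.mul_sum, ← Finset.mul_sum]
      _ ≤ ℓ (Y 0) + cl / 2 * B ^ 2 * (∑' t, h (t + 1) ^ 2) + cl * D := by
          have h2 : ∑ t ∈ Finset.range T, h (t + 1) ^ 2 ≤ ∑' t, h (t + 1) ^ 2 :=
            Summable.sum_le_tsum _ (fun t _ => sq_nonneg _) hRM2
          have h3 := hdD T
          have h4 := hnonneg (Y T)
          have h5 := mul_le_mul_of_nonneg_left h2 (by positivity : (0:ℝ) ≤ cl / 2 * B ^ 2)
          have h6 := mul_le_mul_of_nonneg_left h3 hcl.le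
          linarith
  have hterm0 : ∀ t, 0 ≤ h (t + 1) * g t ^ 2 := fun t =>
    mul_nonneg (hpos t).le (sq_nonneg _)
  have hsummable : Summable (fun t => h (t + 1) * g t ^ 2) :=
    summable_of_sum_range_le hterm0 hsum
  -- boundedness facts for liminf lemmas
  have hbdd : Filter.IsBoundedUnder (· ≤ ·) Filter.atTop (fun t => g t ^ 2) :=
    Filter.isBoundedUnder_of ⟨B ^ 2, fun t => by nlinarith [hgB t, hg0 t]⟩
  have hbdd' : Filter.IsBoundedUnder (· ≥ ·) Filter.atTop (fun t => g t ^ 2) :=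
    Filter.isBoundedUnder_of ⟨0, fun t => sq_nonneg _⟩
  have hge : 0 ≤ Filter.liminf (fun t => g t ^ 2) Filter.atTop :=
    Filter.le_liminf_of_le hbdd.isCoboundedUnder_ge
      (Filter.Eventually.of_forall fun t => sq_nonneg _)
  have hle : Filter.liminf (fun t => g t ^ 2) Filter.atTop ≤ 0 := by
    by_contra hlt
    push_neg at hlt
    set ε := Filter.liminf (fun t => g t ^ 2) Filter.atTop with hε
    have hev : ∀ᶠ t in Filter.atTop, ε / 2 < g t ^ 2 :=
      Filter.eventually_lt_of_lt_liminf (by linarith) hbdd'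
    obtain ⟨N, hN⟩ := Filter.eventually_atTop.1 hev
    set C2 : ℝ := ∑' t, h (t + 1) * g t ^ 2 with hC2
    set K : ℝ := (∑ t ∈ Finset.range N, h (t + 1)) + 2 / ε * C2 with hKdef
    have hbig : ∀ᶠ T in Filter.atTop, K < ∑ t ∈ Finset.range T, h (t + 1) :=
      hRM1.eventually_gt_atTop K
    have hsmall : ∀ᶠ T in Filter.atTop, ∑ t ∈ Finset.range T, h (t + 1) ≤ K := by
      filter_upwards [Filter.eventually_ge_atTop N] with T hT
      have hsplit : ∑ t ∈ Finset.range T, h (t + 1)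
          = (∑ t ∈ Finset.range N, h (t + 1)) + ∑ t ∈ Finset.Ico N T, h (t + 1) := by
        rw [Finset.range_eq_Ico, ← Finset.sum_Ico_consecutive _ (Nat.zero_le N) hT, Finset.range_eq_Ico]
      rw [hsplit, hKdef]
      have h5 : ∑ t ∈ Finset.Ico N T, h (t + 1)
          ≤ ∑ t ∈ Finset.Ico N T, 2 / ε * (h (t + 1) * g t ^ 2) := by
        refine Finset.sum_le_sum fun t ht => ?_
        have hgt : ε / 2 < g t ^ 2 := hN t (Finset.mem_Ico.1 ht).1
        have hh := hpos t
        rw [div_mul_eq_mul_div, le_div_iff₀ hlt]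
        nlinarith
      have h6 : ∑ t ∈ Finset.Ico N T, 2 / ε * (h (t + 1) * g t ^ 2)
          ≤ 2 / ε * C2 := by
        rw [← Finset.mul_sum]
        refine mul_le_mul_of_nonneg_left ?_ (by positivity)
        exact Summable.sum_le_tsum _ (fun t _ => hterm0 t) hsummable
      linarith
    obtain ⟨T, hT1, hT2⟩ := (hbig.and hsmall).exists
    linarith
  linarith
end
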